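/- In the epidemic setting with severity, testing and app usage, let t ∈ ℝ with Ω_t nonempty, assume the app-refined suppression hypothesis holds at all times t' < t, and assume the app notification hypothesis: for constants s^{c,app}_t, s^{c,no app}_t ∈ [0,1], the contact-tracing notification time τ^{A,c} of app users satisfies, for every ρ > 0, P_{t,app}(τ^{A,c} ≤ ρ) = s^{c,app}_t·(F̌^{T,app}_t(ρ) − F̌^{T,app}_t(0)) + s^{c,no app}_t·(F̌^{T,no app}_t(ρ) − F̌^{T,no app}_t(0)), where F̌^{T,a}_t(ρ) := P_t(τ̌^T_t ≤ ρ and Â_t = a) and τ̌^T(ω) := τ^T(σ(ω)) − τ^σ(ω). Then for every ρ > 0, P_{t,app}(τ^{A,c} ≤ ρ) = s^{c,app}_t · Σ_g Σ_{τ>0} ((F^T_{t−τ,g,app}(ρ+τ) − F^T_{t−τ,g,app}(τ))/(1 − ξ_{t−τ}·F^T_{t−τ,g,app}(τ)))·P_t(τ^σ_t = τ, Ĝ_t = g, Â_t = app) + s^{c,no app}_t · Σ_g Σ_{τ>0} ((F^T_{t−τ,g,no app}(ρ+τ) − F^T_{t−τ,g,no app}(τ))/(1 − ξ_{t−τ}·F^T_{t−τ,g,no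 app}(τ)))·P_t(τ^σ_t = τ, Ĝ_t = g, Â_t = no app), with g ranging over the range of G and each sum over τ running over the finitely many positive generation times with the corresponding set Ω_{t−τ,g,a} nonempty. -/

import Mathlib

open Finset
open scoped Classical ENNReal NNReal

noncomputable section

variable {Ω : Type*} [Fintype Ω]

/-- Number of elements of `Ω` satisfying `E`, as a real number. -/
def cnt (E : Ω → Prop) : ℝ := ((Finset.univ.filter E).card : ℝ)

/-- The uniform (counting) probability of the event `E`. -/
def pr (E : Ω → Prop) : ℝ := cnt E / (Fintype.card Ω : ℝ)

/-- The conditional probability of the event `E` given the event `C`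
(junk value `0` if `C` is empty). -/
def prC (C E : Ω → Prop) : ℝ := cnt (fun ω => C ω ∧ E ω) / cnt C

/-- The expectation of `X` under the uniform probability measure. -/
def expec (X : Ω → ℝ) : ℝ := (∑ ω, X ω) / (Fintype.card Ω : ℝ)

/-- The conditional expectation of `X` given the event `C`, i.e. the average of `X`
over `C` (junk value `0` if `C` is empty). -/
def expecC (C : Ω → Prop) (X : Ω → ℝ) : ℝ :=
  (∑ ω ∈ Finset.univ.filter C, X ω) / cnt C

end

/-- Whether or not an individual uses the contact-tracing app. -/
inductive AppUse : Type
  | app : AppUse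
  | noapp : AppUse
  deriving DecidableEq

instance : Fintype AppUse :=
  ⟨{AppUse.app, AppUse.noapp}, fun x => by cases x <;> simp⟩


noncomputable section

variable {Ω : Type*} [Fintype Ω]

/-- `ninf tI σ τ ω` is the number of people infected by `ω` exactly at `ω`'s infectious
age `τ`: the number of `ω' ∈ Ω_{>0}` with `σ ω' = ω` and generation time `τ^σ ω' = τ`. -/
def ninf (tI : Ω → ℝ) (σ : Ω → Ω) (τ : ℝ) (ω : Ω) : ℝ :=
  cnt (fun ω' => 0 < tI ω' ∧ σ ω' = ω ∧ tI ω' - tI (σ ω') = τ)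

/-- The (finitely many) positive times `τ` such that `Ω_{t-τ}` is nonempty. -/
def genTimes (tI : Ω → ℝ) (t : ℝ) : Finset ℝ :=
  (Finset.univ.image (fun ω' => t - tI ω')).filter (fun τ => 0 < τ)

end

noncomputable section

variable {Ω : Type*} [Fintype Ω]

/-- The (finitely many) positive times `τ` such that `Ω_{t-τ,g,a}` is nonempty. -/
def genTimesGA (tI G : Ω → ℝ) (A : Ω → AppUse) (t g : ℝ) (a : AppUse) : Finset ℝ :=
  ((Finset.univ.filter (fun ω' => G ω' = g ∧ A ω' = a)).image (fun ω' => t - tI ω')).filter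
    (fun τ => 0 < τ)

/-- `FT tI G τT t' g τ` is the improper CDF `F^T_{t',g}(τ) = P_{t',g}(τ^T ≤ τ)` of the
testing time of individuals infected at `t'` with severity `g`. -/
def FT (tI G : Ω → ℝ) (τT : Ω → ℝ≥0∞) (t' g τ : ℝ) : ℝ :=
  prC (fun ω => tI ω = t' ∧ G ω = g) (fun ω => (τT ω : EReal) ≤ (τ : ℝ))

/-- `FTa tI G A τT t' g a τ` is the improper CDF
`F^T_{t',g,a}(τ) = P_{t',g,a}(τ^T ≤ τ)` of the testing time of individuals infected at
`t'` with severity `g` and app usage `a`. -/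
def FTa (tI G : Ω → ℝ) (A : Ω → AppUse) (τT : Ω → ℝ≥0∞) (t' g : ℝ) (a : AppUse)
    (τ : ℝ) : ℝ :=
  prC (fun ω => tI ω = t' ∧ G ω = g ∧ A ω = a) (fun ω => (τT ω : EReal) ≤ (τ : ℝ))

end


section Aux

open Finset
open scoped Classical ENNReal NNReal

variable {Ω : Type*} [Fintype Ω]

private lemma card_filter_iff {Ω : Type*} [Fintype Ω] {p q : Ω → Prop}
    {hp : DecidablePred p} {hq : DecidablePred q}
    (h : ∀ x, p x ↔ q x) :
    (@Finset.filter _ p hp Finset.univ).card = (@Finset.filter _ q hq Finset.univ).card := by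
  congr 1
  ext x
  simp only [Finset.mem_filter, Finset.mem_univ, true_and, h]

private lemma cnt_eq_card {p : Ω → Prop} {hp : DecidablePred p} {q : Ω → Prop}
    (h : ∀ x, q x ↔ p x) :
    cnt q = ((@Finset.filter _ p hp Finset.univ).card : ℝ) :=
  congrArg Nat.cast (card_filter_iff h)

private lemma cnt_congr (P Q : Ω → Prop) (h : ∀ ω, P ω ↔ Q ω) : cnt P = cnt Q := by
  unfold cnt
  exact congrArg Nat.cast (card_filter_iff h)

private lemma cnt_fiberwise {ι : Type*} (s : Finset ι) (f : Ω → ι) (P : Ω → Prop)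
    (h : ∀ ω, P ω → f ω ∈ s) :
    cnt P = ∑ i ∈ s, cnt (fun ω => P ω ∧ f ω = i) := by
  unfold cnt
  rw [← Nat.cast_sum]
  congr 1
  rw [Finset.card_eq_sum_card_fiberwise (f := f) (t := s)
    (fun ω hω => h ω (Finset.mem_filter.1 hω).2)]
  refine Finset.sum_congr rfl fun i _ => ?_
  rw [Finset.filter_filter]
  exact card_filter_iff fun _ => Iff.rfl

private lemma cnt_split (P Q : Ω → Prop) (h : ∀ ω, Q ω → P ω) :
    cnt P = cnt Q + cnt (fun ω => P ω ∧ ¬ Q ω) := by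
  unfold cnt
  rw [← Nat.cast_add]
  congr 1
  have h2 := Finset.card_filter_add_card_filter_not
    (s := Finset.univ.filter P) (p := Q)
  rw [Finset.filter_filter, Finset.filter_filter] at h2
  rw [← h2]
  congr 1
  · exact card_filter_iff fun ω => ⟨And.right, fun hq => ⟨h ω hq, hq⟩⟩
  · exact card_filter_iff fun _ => Iff.rfl

private lemma ereal_sub_le (y : EReal) (c r : ℝ) :
    y - (c : EReal) ≤ (r : EReal) ↔ y ≤ (((r + c : ℝ)) : EReal) := by
  rw [EReal.sub_le_iff_le_add (.inl (EReal.coe_ne_bot c)) (.inl (EReal.coe_ne_top c)),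
    EReal.coe_add]

set_option maxHeartbeats 2000000 in
private lemma key_step (tI : Ω → ℝ) (σ : Ω → Ω) (G : Ω → ℝ) (A : Ω → AppUse)
    (τT : Ω → ℝ≥0∞) (ξ : ℝ → ℝ) (t' g : ℝ) (a : AppUse) (τ ρ : ℝ) (hτ : 0 < τ)
    (hρ : 0 < ρ)
    (hne' : (Finset.univ.filter (fun ω' => tI ω' = t' ∧ G ω' = g ∧ A ω' = a)).Nonempty)
    (hsup : ∀ ρ' : ℝ≥0∞,
      0 < prC (fun ω => tI ω = t' ∧ G ω = g ∧ A ω = a) (fun ω => τT ω = ρ') →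
        0 < 1 - ξ t' * FTa tI G A τT t' g a τ ∧
        expecC (fun ω => tI ω = t' ∧ G ω = g ∧ A ω = a ∧ τT ω = ρ') (ninf tI σ τ) =
          ((1 - ξ t' * (if (ρ' : EReal) ≤ (τ : ℝ) then (1:ℝ) else 0)) /
            (1 - ξ t' * FTa tI G A τT t' g a τ)) *
          expecC (fun ω => tI ω = t' ∧ G ω = g ∧ A ω = a) (ninf tI σ τ)) :
    cnt (fun ω => 0 < tI ω ∧ tI ω - tI (σ ω) = τ ∧ tI (σ ω) = t' ∧ G (σ ω) = g ∧
        A (σ ω) = a ∧ ((τT (σ ω) : EReal) ≤ ((ρ + τ : ℝ) : ℝ) ∧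
          ¬ ((τT (σ ω) : EReal) ≤ (τ : ℝ))))
      = ((FTa tI G A τT t' g a (ρ + τ) - FTa tI G A τT t' g a τ) /
          (1 - ξ t' * FTa tI G A τT t' g a τ)) *
        cnt (fun ω => 0 < tI ω ∧ tI ω - tI (σ ω) = τ ∧ tI (σ ω) = t' ∧ G (σ ω) = g ∧
        A (σ ω) = a) := by
  set F' : Finset Ω := Finset.univ.filter (fun ω' => tI ω' = t' ∧ G ω' = g ∧ A ω' = a)
    with hF'
  set M : ℝ := (F'.card : ℝ) with hMdef
  have hM : 0 < M := by
    rw [hMdef]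
    exact Nat.cast_pos.2 (Finset.card_pos.2 hne')
  have e0 : cnt (fun ω => tI ω = t' ∧ G ω = g ∧ A ω = a) = M := by
    rw [hMdef, hF']
    exact cnt_eq_card fun _ => Iff.rfl
  have hFTa : ∀ s : ℝ, FTa tI G A τT t' g a s =
      ((F'.filter (fun x => (τT x : EReal) ≤ (s : ℝ))).card : ℝ) / M := by
    intro s
    unfold FTa prC
    rw [hMdef, hF', Finset.filter_filter]
    congr 1
    all_goals exact cnt_eq_card fun _ => Iff.rfl
  have hprCpos : ∀ ρ' : ℝ≥0∞, (F'.filter (fun ω' => τT ω' = ρ')).Nonempty →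
      0 < prC (fun ω => tI ω = t' ∧ G ω = g ∧ A ω = a) (fun ω => τT ω = ρ') := by
    intro ρ' hfib
    unfold prC
    rw [e0]
    refine div_pos ?_ hM
    calc (0:ℝ) < ((F'.filter (fun ω' => τT ω' = ρ')).card : ℝ) := by
            exact_mod_cast Finset.card_pos.2 hfib
      _ = _ := by
            rw [hF', Finset.filter_filter]
            exact (cnt_eq_card fun _ => Iff.rfl).symm
  have hξF : 0 < 1 - ξ t' * FTa tI G A τT t' g a τ := by
    obtain ⟨x₀, hx₀⟩ := hne'
    refine (hsup (τT x₀) ?_).1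
    exact hprCpos (τT x₀) ⟨x₀, Finset.mem_filter.2 ⟨hx₀, rfl⟩⟩
  set N : ℝ := ∑ ω' ∈ F', ninf tI σ τ ω' with hN
  have hcount : ∀ (Q : ℝ≥0∞ → Prop) (dQ : ∀ x : ℝ≥0∞, Decidable (Q x)),
      cnt (fun ω => 0 < tI ω ∧ tI ω - tI (σ ω) = τ ∧ tI (σ ω) = t' ∧ G (σ ω) = g ∧
        A (σ ω) = a ∧ Q (τT (σ ω)))
      = ∑ ω' ∈ @Finset.filter _ (fun ω' => Q (τT ω')) (fun ω' => dQ (τT ω')) F',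
          ninf tI σ τ ω' := by
    intro Q dQ
    unfold cnt
    rw [Finset.card_eq_sum_card_fiberwise (f := σ)
      (t := @Finset.filter _ (fun ω' => Q (τT ω')) (fun ω' => dQ (τT ω')) F')
      (fun ω hω => by
        simp only [Finset.mem_coe, Finset.mem_filter, Finset.mem_univ, true_and] at hω
        obtain ⟨h1, h2, h3, h4, h5, h6⟩ := hω
        rw [hF']
        simp only [Finset.mem_coe, Finset.mem_filter, Finset.mem_univ, true_and]
        exact ⟨⟨h3, h4, h5⟩, h6⟩)]
    push_cast
    refine Finset.sum_congr rfl fun ω' hω' => ?_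
    rw [hF'] at hω'
    simp only [Finset.mem_filter, Finset.mem_univ, true_and] at hω'
    obtain ⟨⟨ht', hg, ha⟩, hQ⟩ := hω'
    rw [Finset.filter_filter]
    unfold ninf
    refine (cnt_eq_card fun ω => ?_).symm
    constructor
    · rintro ⟨h1, h7, h2⟩
      rw [h7] at *
      exact ⟨⟨h1, h2, ht', hg, ha, hQ⟩, rfl⟩
    · rintro ⟨⟨h1, h2, -⟩, h7⟩
      exact ⟨h1, h7, h2⟩
  have hexp_base : expecC (fun ω => tI ω = t' ∧ G ω = g ∧ A ω = a) (ninf tI σ τ)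
      = N / M := by
    unfold expecC
    rw [e0, hN]
    congr 1
    refine Finset.sum_congr ?_ fun _ _ => rfl
    rw [hF']
    ext y
    simp only [Finset.mem_filter, Finset.mem_univ, true_and]
  have hexp_fib : ∀ ρ' : ℝ≥0∞,
      expecC (fun ω => tI ω = t' ∧ G ω = g ∧ A ω = a ∧ τT ω = ρ') (ninf tI σ τ)
      = (∑ ω' ∈ F'.filter (fun ω' => τT ω' = ρ'), ninf tI σ τ ω') /
        ((F'.filter (fun ω' => τT ω' = ρ')).card : ℝ) := by
    intro ρ'
    unfold expecC
    congr 1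
    · refine Finset.sum_congr ?_ fun _ _ => rfl
      rw [hF', Finset.filter_filter]
      ext y
      simp only [Finset.mem_filter, Finset.mem_univ, true_and]
      tauto
    · rw [hF', Finset.filter_filter]
      exact cnt_eq_card fun ω => by tauto
  have hformula : ∀ ρ' : ℝ≥0∞, (F'.filter (fun ω' => τT ω' = ρ')).Nonempty →
      ∑ ω' ∈ F'.filter (fun ω' => τT ω' = ρ'), ninf tI σ τ ω'
      = ((1 - ξ t' * (if (ρ' : EReal) ≤ (τ : ℝ) then (1:ℝ) else 0)) /
          (1 - ξ t' * FTa tI G A τT t' g a τ))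
        * (N / M) * ((F'.filter (fun ω' => τT ω' = ρ')).card : ℝ) := by
    intro ρ' hfib
    have heq := (hsup ρ' (hprCpos ρ' hfib)).2
    rw [hexp_fib ρ', hexp_base] at heq
    have hc : (0:ℝ) < ((F'.filter (fun ω' => τT ω' = ρ')).card : ℝ) := by
      exact_mod_cast Finset.card_pos.2 hfib
    rw [div_eq_iff (ne_of_gt hc)] at heq
    rw [heq]
    try ring
  have hfib : ∀ (Q : ℝ≥0∞ → Prop) (dQ : ∀ x : ℝ≥0∞, Decidable (Q x)),
      ∑ ω' ∈ @Finset.filter _ (fun ω' => Q (τT ω')) (fun ω' => dQ (τT ω')) F', ninf tI σ τ ω'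
      = (N / (M * (1 - ξ t' * FTa tI G A τT t' g a τ))) *
        ∑ ω' ∈ @Finset.filter _ (fun ω' => Q (τT ω')) (fun ω' => dQ (τT ω')) F',
          (1 - ξ t' * (if (τT ω' : EReal) ≤ (τ : ℝ) then (1:ℝ) else 0)) := by
    intro Q dQ
    rw [← Finset.sum_fiberwise_of_maps_to (g := τT)
      (t := (@Finset.filter _ (fun ω' => Q (τT ω')) (fun ω' => dQ (τT ω')) F').image τT)
      (fun x hx => Finset.mem_image_of_mem _ hx) (f := ninf tI σ τ),
      ← Finset.sum_fiberwise_of_maps_to (g := τT)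
      (t := (@Finset.filter _ (fun ω' => Q (τT ω')) (fun ω' => dQ (τT ω')) F').image τT)
      (fun x hx => Finset.mem_image_of_mem _ hx)
      (f := fun ω' => (1 - ξ t' * (if (τT ω' : EReal) ≤ (τ : ℝ) then (1:ℝ) else 0))),
      Finset.mul_sum]
    refine Finset.sum_congr rfl fun ρ' hρ' => ?_
    obtain ⟨x, hxs, hxρ'⟩ := Finset.mem_image.1 hρ'
    have hxQ : Q (τT x) := (Finset.mem_filter.1 hxs).2
    have hsfilt : (@Finset.filter _ (fun ω' => Q (τT ω')) (fun ω' => dQ (τT ω')) F').filter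
          (fun ω' => τT ω' = ρ')
        = F'.filter (fun ω' => τT ω' = ρ') := by
      rw [Finset.filter_filter]
      ext y
      simp only [Finset.mem_filter]
      constructor
      · rintro ⟨hy, -, h2⟩
        exact ⟨hy, h2⟩
      · rintro ⟨hy, h2⟩
        refine ⟨hy, ?_, h2⟩
        rw [h2, ← hxρ']
        exact hxQ
    have hfibne : (F'.filter (fun ω' => τT ω' = ρ')).Nonempty :=
      ⟨x, Finset.mem_filter.2 ⟨(Finset.mem_filter.1 hxs).1, hxρ'⟩⟩
    have hconst : ∑ ω' ∈ F'.filter (fun ω' => τT ω' = ρ'),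
        (1 - ξ t' * (if (τT ω' : EReal) ≤ (τ : ℝ) then (1:ℝ) else 0))
        = (1 - ξ t' * (if (ρ' : EReal) ≤ (τ : ℝ) then (1:ℝ) else 0)) *
          ((F'.filter (fun ω' => τT ω' = ρ')).card : ℝ) := by
      rw [Finset.sum_congr rfl (fun y hy => by
        rw [(Finset.mem_filter.1 hy).2]), Finset.sum_const, nsmul_eq_mul, mul_comm]
    calc ∑ ω' ∈ (@Finset.filter _ (fun ω' => Q (τT ω')) (fun ω' => dQ (τT ω')) F').filter
          (fun ω' => τT ω' = ρ'), ninf tI σ τ ω'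
        = ∑ ω' ∈ F'.filter (fun ω' => τT ω' = ρ'), ninf tI σ τ ω' :=
          Finset.sum_congr hsfilt fun _ _ => rfl
      _ = ((1 - ξ t' * (if (ρ' : EReal) ≤ (τ : ℝ) then (1:ℝ) else 0)) /
          (1 - ξ t' * FTa tI G A τT t' g a τ))
          * (N / M) * ((F'.filter (fun ω' => τT ω' = ρ')).card : ℝ) :=
          hformula ρ' hfibne
      _ = N / (M * (1 - ξ t' * FTa tI G A τT t' g a τ)) *
          ((1 - ξ t' * (if (ρ' : EReal) ≤ (τ : ℝ) then (1:ℝ) else 0)) *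
            ((F'.filter (fun ω' => τT ω' = ρ')).card : ℝ)) := by
          field_simp
      _ = N / (M * (1 - ξ t' * FTa tI G A τT t' g a τ)) *
          ∑ ω' ∈ F'.filter (fun ω' => τT ω' = ρ'),
            (1 - ξ t' * (if (τT ω' : EReal) ≤ (τ : ℝ) then (1:ℝ) else 0)) := by
          rw [hconst]
      _ = _ := by
          rw [Finset.sum_congr hsfilt fun _ _ => rfl]
  have hTall2 : cnt (fun ω => 0 < tI ω ∧ tI ω - tI (σ ω) = τ ∧ tI (σ ω) = t' ∧
      G (σ ω) = g ∧ A (σ ω) = a) = N := by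
    rw [cnt_congr _ (fun ω => 0 < tI ω ∧ tI ω - tI (σ ω) = τ ∧ tI (σ ω) = t' ∧
      G (σ ω) = g ∧ A (σ ω) = a ∧ True) (fun ω => by tauto), hcount (fun _ => True) (fun _ => inferInstance), hN]
    refine Finset.sum_congr ?_ fun _ _ => rfl
    ext y
    simp only [Finset.mem_filter, and_true]
  have hind : ∑ ω' ∈ F'.filter (fun ω' => (τT ω' : EReal) ≤ ((ρ + τ : ℝ) : ℝ) ∧
        ¬ ((τT ω' : EReal) ≤ (τ : ℝ))),
      (1 - ξ t' * (if (τT ω' : EReal) ≤ (τ : ℝ) then (1:ℝ) else 0))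
      = ((F'.filter (fun ω' => (τT ω' : EReal) ≤ ((ρ + τ : ℝ) : ℝ) ∧
        ¬ ((τT ω' : EReal) ≤ (τ : ℝ)))).card : ℝ) := by
    rw [Finset.sum_congr rfl (fun y hy => by
      rw [if_neg (Finset.mem_filter.1 hy).2.2, mul_zero, sub_zero]),
      Finset.sum_const, nsmul_eq_mul, mul_one]
  have hsub : ((F'.filter (fun ω' => (τT ω' : EReal) ≤ ((ρ + τ : ℝ) : ℝ))).card : ℝ)
      = ((F'.filter (fun ω' => (τT ω' : EReal) ≤ (τ : ℝ))).card : ℝ)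
      + ((F'.filter (fun ω' => (τT ω' : EReal) ≤ ((ρ + τ : ℝ) : ℝ) ∧
          ¬ ((τT ω' : EReal) ≤ (τ : ℝ)))).card : ℝ) := by
    rw [← Nat.cast_add]
    congr 1
    have h2 := Finset.card_filter_add_card_filter_not
      (s := F'.filter (fun ω' => (τT ω' : EReal) ≤ ((ρ + τ : ℝ) : ℝ)))
      (p := fun ω' => (τT ω' : EReal) ≤ (τ : ℝ))
    rw [Finset.filter_filter, Finset.filter_filter] at h2
    rw [← h2]
    congr 1
    · congr 1
      ext y
      simp only [hF', Finset.mem_filter, Finset.mem_univ, true_and]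
      constructor
      · rintro ⟨hC, -, h1⟩
        exact ⟨hC, h1⟩
      · rintro ⟨hC, h1⟩
        exact ⟨hC, le_trans h1 (EReal.coe_le_coe_iff.2 (by linarith)), h1⟩
    · congr 1
      ext y
      simp only [Finset.mem_filter]
      tauto
  have hcardQ : ((F'.filter (fun ω' => (τT ω' : EReal) ≤ ((ρ + τ : ℝ) : ℝ) ∧
      ¬ ((τT ω' : EReal) ≤ (τ : ℝ)))).card : ℝ)
      = FTa tI G A τT t' g a (ρ + τ) * M - FTa tI G A τT t' g a τ * M := by
    have c1 := hFTa (ρ + τ)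
    have c2 := hFTa τ
    rw [eq_div_iff (ne_of_gt hM)] at c1 c2
    linarith [hsub]
  have hM' : M ≠ 0 := ne_of_gt hM
  have hξF' : (1 - ξ t' * FTa tI G A τT t' g a τ) ≠ 0 := ne_of_gt hξF
  rw [hTall2]
  calc cnt (fun ω => 0 < tI ω ∧ tI ω - tI (σ ω) = τ ∧ tI (σ ω) = t' ∧ G (σ ω) = g ∧
        A (σ ω) = a ∧ ((τT (σ ω) : EReal) ≤ ((ρ + τ : ℝ) : ℝ) ∧
          ¬ ((τT (σ ω) : EReal) ≤ (τ : ℝ))))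
      = ∑ ω' ∈ F'.filter (fun ω' => (τT ω' : EReal) ≤ ((ρ + τ : ℝ) : ℝ) ∧
          ¬ ((τT ω' : EReal) ≤ (τ : ℝ))), ninf tI σ τ ω' := hcount (fun x => (x : EReal) ≤ ((ρ + τ : ℝ) : ℝ) ∧ ¬ ((x : EReal) ≤ (τ : ℝ))) (fun _ => inferInstance)
    _ = (N / (M * (1 - ξ t' * FTa tI G A τT t' g a τ))) *
        ∑ ω' ∈ F'.filter (fun ω' => (τT ω' : EReal) ≤ ((ρ + τ : ℝ) : ℝ) ∧
          ¬ ((τT ω' : EReal) ≤ (τ : ℝ))),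
          (1 - ξ t' * (if (τT ω' : EReal) ≤ (τ : ℝ) then (1:ℝ) else 0)) := hfib (fun x => (x : EReal) ≤ ((ρ + τ : ℝ) : ℝ) ∧ ¬ ((x : EReal) ≤ (τ : ℝ))) (fun _ => inferInstance)
    _ = (N / (M * (1 - ξ t' * FTa tI G A τT t' g a τ))) *
        ((F'.filter (fun ω' => (τT ω' : EReal) ≤ ((ρ + τ : ℝ) : ℝ) ∧
          ¬ ((τT ω' : EReal) ≤ (τ : ℝ)))).card : ℝ) := by rw [hind]
    _ = ((FTa tI G A τT t' g a (ρ + τ) - FTa tI G A τT t' g a τ) /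
          (1 - ξ t' * FTa tI G A τT t' g a τ)) * N := by
        rw [hcardQ]
        field_simp

end Aux

/-- time evolution equation for the notification time of app users.
Epidemic setting with severity `G`, app usage `A`, testing time `τ^T : Ω → [0,∞]`,
contact-tracing notification time `τ^{A,c} : Ω → [0,∞]`, `ξ : ℝ → [0,1]` and
contact-tracing efficiencies `s^{c,app}_t, s^{c,no app}_t ∈ [0,1]`.  Assume the
app-refined suppression hypothesis at all `t' < t` and the app notification
hypothesis, with `F̌^{T,a}_t(ρ) := P_t(τ̌^T_t ≤ ρ ∧ Â_t = a)` and
`τ̌^T(ω) := τ^T(σ ω) − τ^σ(ω)`.  Then for every `ρ > 0`, `P_{t,app}(τ^{A,c} ≤ ρ)`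
equals the sum of the two app/no-app double sums stated in the paper
(Eq. (9)/(19)). -/
theorem statement_17 {Ω : Type*} [Fintype Ω] (tI : Ω → ℝ) (σ : Ω → Ω)
    (hσ : ∀ ω, 0 < tI ω → tI (σ ω) < tI ω)
    (G : Ω → ℝ) (A : Ω → AppUse) (τT : Ω → ℝ≥0∞) (τAc : Ω → ℝ≥0∞) (ξ : ℝ → ℝ)
    (hξ : ∀ s : ℝ, 0 ≤ ξ s ∧ ξ s ≤ 1) (t : ℝ)
    (scApp scNoapp : ℝ) (hscApp : 0 ≤ scApp ∧ scApp ≤ 1)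
    (hscNoapp : 0 ≤ scNoapp ∧ scNoapp ≤ 1)
    (hne : (Finset.univ.filter (fun ω => tI ω = t)).Nonempty)
    (hneApp : (Finset.univ.filter (fun ω => tI ω = t ∧ A ω = AppUse.app)).Nonempty)
    (hsup : ∀ t' : ℝ, t' < t → ∀ (g : ℝ) (a' : AppUse),
      (Finset.univ.filter (fun ω => tI ω = t' ∧ G ω = g ∧ A ω = a')).Nonempty →
      ∀ τ : ℝ, 0 < τ → ∀ ρ' : ℝ≥0∞,
        0 < prC (fun ω => tI ω = t' ∧ G ω = g ∧ A ω = a') (fun ω => τT ω = ρ') →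
          0 < 1 - ξ t' * FTa tI G A τT t' g a' τ ∧
          expecC (fun ω => tI ω = t' ∧ G ω = g ∧ A ω = a' ∧ τT ω = ρ')
              (ninf tI σ τ) =
            ((1 - ξ t' * (if (ρ' : EReal) ≤ (τ : ℝ) then (1 : ℝ) else 0)) /
                (1 - ξ t' * FTa tI G A τT t' g a' τ)) *
              expecC (fun ω => tI ω = t' ∧ G ω = g ∧ A ω = a') (ninf tI σ τ))
    (hnotif : ∀ ρ : ℝ, 0 < ρ →
      prC (fun ω => tI ω = t ∧ A ω = AppUse.app)
          (fun ω => (τAc ω : EReal) ≤ (ρ : ℝ)) =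
        scApp *
          (prC (fun ω => tI ω = t)
              (fun ω => 0 < tI ω ∧
                (τT (σ ω) : EReal) - ((tI ω - tI (σ ω) : ℝ) : EReal) ≤ (ρ : ℝ) ∧
                A (σ ω) = AppUse.app) -
            prC (fun ω => tI ω = t)
              (fun ω => 0 < tI ω ∧
                (τT (σ ω) : EReal) - ((tI ω - tI (σ ω) : ℝ) : EReal) ≤ ((0 : ℝ) : EReal) ∧
                A (σ ω) = AppUse.app)) +
        scNoapp *
          (prC (fun ω => tI ω = t)
              (fun ω => 0 < tI ω ∧
                (τT (σ ω) : EReal) - ((tI ω - tI (σ ω) : ℝ) : EReal) ≤ (ρ : ℝ) ∧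
                A (σ ω) = AppUse.noapp) -
            prC (fun ω => tI ω = t)
              (fun ω => 0 < tI ω ∧
                (τT (σ ω) : EReal) - ((tI ω - tI (σ ω) : ℝ) : EReal) ≤ ((0 : ℝ) : EReal) ∧
                A (σ ω) = AppUse.noapp))) :
    ∀ ρ : ℝ, 0 < ρ →
      prC (fun ω => tI ω = t ∧ A ω = AppUse.app)
          (fun ω => (τAc ω : EReal) ≤ (ρ : ℝ)) =
        scApp *
          ∑ g ∈ Finset.univ.image G, ∑ τ ∈ genTimesGA tI G A t g AppUse.app,
            ((FTa tI G A τT (t - τ) g AppUse.app (ρ + τ) -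
                FTa tI G A τT (t - τ) g AppUse.app τ) /
                (1 - ξ (t - τ) * FTa tI G A τT (t - τ) g AppUse.app τ)) *
              prC (fun ω => tI ω = t)
                (fun ω => 0 < tI ω ∧ tI ω - tI (σ ω) = τ ∧ G (σ ω) = g ∧
                  A (σ ω) = AppUse.app) +
        scNoapp *
          ∑ g ∈ Finset.univ.image G, ∑ τ ∈ genTimesGA tI G A t g AppUse.noapp,
            ((FTa tI G A τT (t - τ) g AppUse.noapp (ρ + τ) -
                FTa tI G A τT (t - τ) g AppUse.noapp τ) /
                (1 - ξ (t - τ) * FTa tI G A τT (t - τ) g AppUse.noapp τ)) *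
              prC (fun ω => tI ω = t)
                (fun ω => 0 < tI ω ∧ tI ω - tI (σ ω) = τ ∧ G (σ ω) = g ∧
                  A (σ ω) = AppUse.noapp) := by
  intro ρ hρ
  rw [hnotif ρ hρ]
  have main : ∀ a : AppUse,
      prC (fun ω => tI ω = t)
          (fun ω => 0 < tI ω ∧
            (τT (σ ω) : EReal) - ((tI ω - tI (σ ω) : ℝ) : EReal) ≤ (ρ : ℝ) ∧
            A (σ ω) = a) -
        prC (fun ω => tI ω = t)
          (fun ω => 0 < tI ω ∧
            (τT (σ ω) : EReal) - ((tI ω - tI (σ ω) : ℝ) : EReal) ≤ ((0 : ℝ) : EReal) ∧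
            A (σ ω) = a)
      = ∑ g ∈ Finset.univ.image G, ∑ τ ∈ genTimesGA tI G A t g a,
          ((FTa tI G A τT (t - τ) g a (ρ + τ) - FTa tI G A τT (t - τ) g a τ) /
              (1 - ξ (t - τ) * FTa tI G A τT (t - τ) g a τ)) *
            prC (fun ω => tI ω = t)
              (fun ω => 0 < tI ω ∧ tI ω - tI (σ ω) = τ ∧ G (σ ω) = g ∧
                A (σ ω) = a) := by
    intro a
    have hKnum : cnt (fun ω => tI ω = t ∧ 0 < tI ω ∧
          (τT (σ ω) : EReal) - ((tI ω - tI (σ ω) : ℝ) : EReal) ≤ (ρ : ℝ) ∧ A (σ ω) = a)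
        - cnt (fun ω => tI ω = t ∧ 0 < tI ω ∧
          (τT (σ ω) : EReal) - ((tI ω - tI (σ ω) : ℝ) : EReal) ≤ ((0 : ℝ) : EReal) ∧
          A (σ ω) = a)
        = ∑ g ∈ Finset.univ.image G, ∑ τ ∈ genTimesGA tI G A t g a,
            ((FTa tI G A τT (t - τ) g a (ρ + τ) - FTa tI G A τT (t - τ) g a τ) /
              (1 - ξ (t - τ) * FTa tI G A τT (t - τ) g a τ)) *
            cnt (fun ω => tI ω = t ∧ 0 < tI ω ∧ tI ω - tI (σ ω) = τ ∧ G (σ ω) = g ∧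
              A (σ ω) = a) := by
      have hmono : ∀ ω : Ω, (tI ω = t ∧ 0 < tI ω ∧
          (τT (σ ω) : EReal) - ((tI ω - tI (σ ω) : ℝ) : EReal) ≤ ((0 : ℝ) : EReal) ∧
          A (σ ω) = a) → (tI ω = t ∧ 0 < tI ω ∧
          (τT (σ ω) : EReal) - ((tI ω - tI (σ ω) : ℝ) : EReal) ≤ (ρ : ℝ) ∧
          A (σ ω) = a) := by
        rintro ω ⟨h1, h2, h3, h4⟩
        exact ⟨h1, h2, le_trans h3 (EReal.coe_le_coe_iff.2 hρ.le), h4⟩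
      have hsplit := cnt_split _ _ hmono
      have hchain : cnt (fun ω => (tI ω = t ∧ 0 < tI ω ∧
            (τT (σ ω) : EReal) - ((tI ω - tI (σ ω) : ℝ) : EReal) ≤ (ρ : ℝ) ∧
            A (σ ω) = a) ∧
          ¬ (tI ω = t ∧ 0 < tI ω ∧
            (τT (σ ω) : EReal) - ((tI ω - tI (σ ω) : ℝ) : EReal) ≤ ((0 : ℝ) : EReal) ∧
            A (σ ω) = a))
          = ∑ g ∈ Finset.univ.image G, ∑ τ ∈ genTimesGA tI G A t g a,
            ((FTa tI G A τT (t - τ) g a (ρ + τ) - FTa tI G A τT (t - τ) g a τ) /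
              (1 - ξ (t - τ) * FTa tI G A τT (t - τ) g a τ)) *
            cnt (fun ω => tI ω = t ∧ 0 < tI ω ∧ tI ω - tI (σ ω) = τ ∧ G (σ ω) = g ∧
              A (σ ω) = a) := by
        rw [cnt_congr _ (fun ω => (tI ω = t ∧ 0 < tI ω ∧ A (σ ω) = a ∧
            ((τT (σ ω) : EReal) - ((tI ω - tI (σ ω) : ℝ) : EReal) ≤ (ρ : ℝ)) ∧
            ¬ ((τT (σ ω) : EReal) - ((tI ω - tI (σ ω) : ℝ) : EReal) ≤ ((0 : ℝ) : EReal))))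
          (fun ω => by tauto)]
        rw [cnt_fiberwise (Finset.univ.image G) (fun ω => G (σ ω)) _
          (fun ω _ => Finset.mem_image_of_mem G (Finset.mem_univ (σ ω)))]
        refine Finset.sum_congr rfl fun g hg => ?_
        rw [cnt_fiberwise (genTimesGA tI G A t g a) (fun ω => tI ω - tI (σ ω))
          (fun ω => (tI ω = t ∧ 0 < tI ω ∧ A (σ ω) = a ∧
            ((τT (σ ω) : EReal) - ((tI ω - tI (σ ω) : ℝ) : EReal) ≤ (ρ : ℝ)) ∧
            ¬ ((τT (σ ω) : EReal) - ((tI ω - tI (σ ω) : ℝ) : EReal) ≤ ((0 : ℝ) : EReal))) ∧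
            G (σ ω) = g)
          (fun ω hω => by
            obtain ⟨⟨h1, h2, ha4, h4, h5⟩, hgg⟩ := hω
            simp only [genTimesGA, Finset.mem_filter, Finset.mem_image, Finset.mem_univ,
              true_and]
            constructor
            · exact ⟨σ ω, ⟨hgg, ha4⟩, by linarith⟩
            · have := hσ ω h2
              linarith)]
        refine Finset.sum_congr rfl fun τ hτmem => ?_
        simp only [genTimesGA, Finset.mem_filter, Finset.mem_image, Finset.mem_univ,
          true_and] at hτmem
        obtain ⟨⟨ω'', ⟨hgω'', haω''⟩, htω''⟩, hτpos⟩ := hτmem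
        have hne'' : (Finset.univ.filter
            (fun ω' => tI ω' = t - τ ∧ G ω' = g ∧ A ω' = a)).Nonempty :=
          ⟨ω'', Finset.mem_filter.2 ⟨Finset.mem_univ _, by linarith, hgω'', haω''⟩⟩
        have hks := key_step tI σ G A τT ξ (t - τ) g a τ ρ hτpos hρ hne''
          (fun ρ' => hsup (t - τ) (by linarith) g a hne'' τ hτpos ρ')
        have hiff : ∀ ω : Ω, (((tI ω = t ∧ 0 < tI ω ∧ A (σ ω) = a ∧
            ((τT (σ ω) : EReal) - ((tI ω - tI (σ ω) : ℝ) : EReal) ≤ (ρ : ℝ)) ∧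
            ¬ ((τT (σ ω) : EReal) - ((tI ω - tI (σ ω) : ℝ) : EReal) ≤ ((0 : ℝ) : EReal))) ∧
            G (σ ω) = g) ∧ tI ω - tI (σ ω) = τ)
            ↔ (0 < tI ω ∧ tI ω - tI (σ ω) = τ ∧ tI (σ ω) = t - τ ∧ G (σ ω) = g ∧
              A (σ ω) = a ∧ ((τT (σ ω) : EReal) ≤ ((ρ + τ : ℝ) : ℝ) ∧
              ¬ ((τT (σ ω) : EReal) ≤ (τ : ℝ)))) := by
          intro ω
          constructor
          · rintro ⟨⟨⟨h1, h2, ha4, h4, h5⟩, hgg⟩, hτσ⟩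
            rw [hτσ] at h4 h5
            refine ⟨h2, hτσ, by linarith, hgg, ha4, (ereal_sub_le _ τ ρ).1 h4, ?_⟩
            intro hc
            exact h5 ((ereal_sub_le _ τ 0).2 (by rw [zero_add]; exact hc))
          · rintro ⟨h2, hτσ, ht', hgg, ha4, h6, h7⟩
            have h1 : tI ω = t := by linarith
            refine ⟨⟨⟨h1, h2, ha4, ?_, ?_⟩, hgg⟩, hτσ⟩
            · rw [hτσ]
              exact (ereal_sub_le _ τ ρ).2 h6
            · rw [hτσ]
              intro hc
              have h8 := (ereal_sub_le _ τ 0).1 hc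
              rw [zero_add] at h8
              exact h7 h8
        have hiff2 : ∀ ω : Ω, (0 < tI ω ∧ tI ω - tI (σ ω) = τ ∧ tI (σ ω) = t - τ ∧
            G (σ ω) = g ∧ A (σ ω) = a)
            ↔ (tI ω = t ∧ 0 < tI ω ∧ tI ω - tI (σ ω) = τ ∧ G (σ ω) = g ∧
              A (σ ω) = a) := by
          intro ω
          constructor
          · rintro ⟨h2, hτσ, ht', hgg, ha4⟩
            exact ⟨by linarith, h2, hτσ, hgg, ha4⟩
          · rintro ⟨h1, h2, hτσ, hgg, ha4⟩
            exact ⟨h2, hτσ, by linarith, hgg, ha4⟩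
        calc cnt (fun ω => ((tI ω = t ∧ 0 < tI ω ∧ A (σ ω) = a ∧
            ((τT (σ ω) : EReal) - ((tI ω - tI (σ ω) : ℝ) : EReal) ≤ (ρ : ℝ)) ∧
            ¬ ((τT (σ ω) : EReal) - ((tI ω - tI (σ ω) : ℝ) : EReal) ≤ ((0 : ℝ) : EReal))) ∧
            G (σ ω) = g) ∧ tI ω - tI (σ ω) = τ)
            = cnt (fun ω => 0 < tI ω ∧ tI ω - tI (σ ω) = τ ∧ tI (σ ω) = t - τ ∧
              G (σ ω) = g ∧ A (σ ω) = a ∧ ((τT (σ ω) : EReal) ≤ ((ρ + τ : ℝ) : ℝ) ∧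
              ¬ ((τT (σ ω) : EReal) ≤ (τ : ℝ)))) := cnt_congr _ _ hiff
          _ = ((FTa tI G A τT (t - τ) g a (ρ + τ) - FTa tI G A τT (t - τ) g a τ) /
              (1 - ξ (t - τ) * FTa tI G A τT (t - τ) g a τ)) *
              cnt (fun ω => 0 < tI ω ∧ tI ω - tI (σ ω) = τ ∧ tI (σ ω) = t - τ ∧
              G (σ ω) = g ∧ A (σ ω) = a) := hks
          _ = ((FTa tI G A τT (t - τ) g a (ρ + τ) - FTa tI G A τT (t - τ) g a τ) /
              (1 - ξ (t - τ) * FTa tI G A τT (t - τ) g a τ)) *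
              cnt (fun ω => tI ω = t ∧ 0 < tI ω ∧ tI ω - tI (σ ω) = τ ∧ G (σ ω) = g ∧
              A (σ ω) = a) := by
            rw [cnt_congr (fun ω => 0 < tI ω ∧ tI ω - tI (σ ω) = τ ∧ tI (σ ω) = t - τ ∧
              G (σ ω) = g ∧ A (σ ω) = a) _ hiff2]
      linarith [hsplit, hchain]
    simp only [prC]
    rw [div_sub_div_same, hKnum, Finset.sum_div]
    refine Finset.sum_congr rfl fun g _ => ?_
    rw [Finset.sum_div]
    refine Finset.sum_congr rfl fun τ _ => ?_
    rw [mul_div_assoc]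
  rw [main AppUse.app, main AppUse.noapp]
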